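/- Let H = ([n], E) with E = {e_1,…,e_m} be a 3-uniform hypergraph with m = cn hyperedges, where c ≥ 1, and suppose H is (ε, 100c)-degree bounded and (β, γ)-asymmetric with γ ≥ 200ε. Let 𝒞 = {C_1,…,C_m} be any 3XOR instance with n variables such that, for each i ∈ [m], the equation C_i uses exactly the three variables indexed by the hyperedge e_i. Set δ = min{1/200, γ/48, ε/(95c)}. If GI(G_𝒞, G_{homog(𝒞)}) ≥ 1 − δ, then val(𝒞) ≥ 0.9 − 100(ε + β). -/

import Mathlib

open scoped Classical

noncomputable section

namespace Giso

/-- The finset of edges of a simple graph on a finite vertex type. -/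
def edges {V : Type*} [Fintype V] (G : SimpleGraph V) : Finset (Sym2 V) :=
  Finset.univ.filter fun e => e ∈ G.edgeSet

/-- The fraction of edges of `G` carried to edges of `H` by the bijection `π`. -/
def GIval {V W : Type*} [Fintype V] [Fintype W] (G : SimpleGraph V) (H : SimpleGraph W)
    (π : V ≃ W) : ℝ :=
  (((edges G).filter fun e => Sym2.map (fun x => π x) e ∈ edges H).card : ℝ) /
    max ((edges G).card : ℝ) ((edges H).card : ℝ)

/-- `GI(G,H)`: the best fraction of preserved edges over all vertex bijections. -/
def GI {V W : Type*} [Fintype V] [Fintype W] (G : SimpleGraph V) (H : SimpleGraph W) : ℝ :=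
  ⨆ π : V ≃ W, GIval G H π

/-- A 3XOR equation on `n` variables: three distinct variable indices and a
right-hand side in `Z₂`. -/
structure XorEq (n : ℕ) where
  idx : Fin 3 → Fin n
  rhs : ZMod 2
  inj : Function.Injective idx

/-- A 3XOR instance: a list of `m` equations. -/
abbrev XorInstance (n m : ℕ) := Fin m → XorEq n

/-- The homogeneous version of an equation: the right-hand side is replaced by `0`. -/
def XorEq.homog {n : ℕ} (C : XorEq n) : XorEq n := ⟨C.idx, 0, C.inj⟩

/-- The homogeneous version of an instance. -/
def homogInst {n m : ℕ} (𝒞 : XorInstance n m) : XorInstance n m := fun i => (𝒞 i).homog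

/-- The assignment `τ` satisfies the equation `C`. -/
def satisfies {n : ℕ} (τ : Fin n → ZMod 2) (C : XorEq n) : Prop :=
  τ (C.idx 0) + τ (C.idx 1) + τ (C.idx 2) = C.rhs

/-- `val(𝒞;τ)`: the fraction of equations satisfied by `τ`. -/
def xorValAt {n m : ℕ} (𝒞 : XorInstance n m) (τ : Fin n → ZMod 2) : ℝ :=
  ((Finset.univ.filter fun i : Fin m => satisfies τ (𝒞 i)).card : ℝ) / m

/-- `val(𝒞)`: the maximum over assignments of the fraction of satisfied equations. -/
def xorVal {n m : ℕ} (𝒞 : XorInstance n m) : ℝ :=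
  ⨆ τ : Fin n → ZMod 2, xorValAt 𝒞 τ

/-- The satisfying assignments of an equation (there are four of them). -/
abbrev SatAssign {n : ℕ} (C : XorEq n) : Type :=
  {α : Fin 3 → ZMod 2 // α 0 + α 1 + α 2 = C.rhs}

/-- Vertices of the gadget graph `G_𝒞`. -/
abbrev GVert {n m : ℕ} (𝒞 : XorInstance n m) : Type :=
  (Fin n × ZMod 2) ⊕ (Σ i : Fin m, SatAssign (𝒞 i))

/-- The gadget graph `G_𝒞` associated to a 3XOR instance `𝒞`. -/
def gadgetGraph {n m : ℕ} (𝒞 : XorInstance n m) : SimpleGraph (GVert 𝒞) :=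
  SimpleGraph.fromRel fun u v =>
    (∃ (j : Fin n) (a a' : ZMod 2), u = Sum.inl (j, a) ∧ v = Sum.inl (j, a')) ∨
    (∃ (i : Fin m) (α α' : SatAssign (𝒞 i)), u = Sum.inr ⟨i, α⟩ ∧ v = Sum.inr ⟨i, α'⟩) ∨
    (∃ (i : Fin m) (α : SatAssign (𝒞 i)) (t : Fin 3),
      u = Sum.inl ((𝒞 i).idx t, α.1 t) ∧ v = Sum.inr ⟨i, α⟩)

/-- The hyperedge of variables used by an equation. -/
def tripleOf {n : ℕ} (C : XorEq n) : Finset (Fin n) := {C.idx 0, C.idx 1, C.idx 2}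

/-- Number of fixed points of a permutation of `[n]`. -/
def fixedCount {n : ℕ} (π : Equiv.Perm (Fin n)) : ℕ :=
  (Finset.univ.filter fun v => π v = v).card

/-- `AUT(H;π)`: the fraction of hyperedges `e` with `π(e)` again a hyperedge. -/
def hAut {n : ℕ} (E : Finset (Finset (Fin n))) (π : Equiv.Perm (Fin n)) : ℝ :=
  ((E.filter fun e => e.image (fun x => π x) ∈ E).card : ℝ) / (E.card : ℝ)

/-- `(β,γ)`-asymmetry for a hypergraph given by its edge set. -/
def hAsymmetric {n : ℕ} (E : Finset (Finset (Fin n))) (β γ : ℝ) : Prop :=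
  ∀ π : Equiv.Perm (Fin n), (fixedCount π : ℝ) ≤ (1 - β) * n → hAut E π < 1 - γ

/-- Degree of a vertex in a hypergraph. -/
def hdeg {n : ℕ} (E : Finset (Finset (Fin n))) (v : Fin n) : ℕ :=
  (E.filter fun e => v ∈ e).card

/-- `(ε,D)`-degree boundedness: every set of `⌈εn⌉` vertices has average degree at
most `D`. -/
def DegBounded {n : ℕ} (E : Finset (Finset (Fin n))) (ε D : ℝ) : Prop :=
  ∀ S : Finset (Fin n), S.card = ⌈ε * n⌉₊ → ((∑ v ∈ S, hdeg E v : ℕ) : ℝ) ≤ D * S.card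

variable {n m : ℕ}

variable {C : XorEq n}

lemma zmod2_cases (a : ZMod 2) : a = 0 ∨ a = 1 := by revert a; decide

lemma zmod2_pigeon (u v w : ZMod 2) : u = v ∨ u = w ∨ v = w := by revert u v w; decide

lemma fin3_cover (s t : Fin 3) : s = t ∨ s = t + 1 ∨ s = t + 2 := by revert s t; decide

lemma fin3_sum_rot (t : Fin 3) (f : Fin 3 → ZMod 2) :
    f t + f (t + 1) + f (t + 2) = f 0 + f 1 + f 2 := by
  fin_cases t <;> simp <;> ring

variable {n : ℕ} {C : XorEq n}

lemma satAssign_ext {t : Fin 3} {α β : SatAssign C}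
    (h1 : α.1 t = β.1 t) (h2 : α.1 (t + 1) = β.1 (t + 1)) : α = β := by
  have hA := α.2
  have hB := β.2
  rw [← fin3_sum_rot t] at hA hB
  apply Subtype.ext
  funext s
  rcases fin3_cover s t with h | h | h
  · rw [h]; exact h1
  · rw [h]; exact h2
  · rw [h]
    have : α.1 (t + 2) = C.rhs - α.1 t - α.1 (t + 1) := by linear_combination hA
    rw [this, h1, h2]
    linear_combination -hB

lemma satAssign_not_three {t : Fin 3} {b : ZMod 2} {α β γ : SatAssign C}
    (hαβ : α ≠ β) (hαγ : α ≠ γ) (hβγ : β ≠ γ)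
    (ha : α.1 t = b) (hb : β.1 t = b) (hc : γ.1 t = b) : False := by
  rcases zmod2_pigeon (α.1 (t+1)) (β.1 (t+1)) (γ.1 (t+1)) with h | h | h
  · exact hαβ (satAssign_ext (ha.trans hb.symm) h)
  · exact hαγ (satAssign_ext (ha.trans hc.symm) h)
  · exact hβγ (satAssign_ext (hb.trans hc.symm) h)

/-- explicit satisfying assignment with a given value at a given coordinate -/
def mkSat (C : XorEq n) (t : Fin 3) (a : ZMod 2) : SatAssign C :=
  ⟨fun s => if s = t then a else if s = t + 1 then C.rhs + a else 0, by
    have h0 : ∀ u : ZMod 2, u + u = 0 := by decide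
    fin_cases t <;> simp <;> linear_combination h0 a⟩

lemma mkSat_val (C : XorEq n) (t : Fin 3) (a : ZMod 2) : (mkSat C t a).1 t = a := by
  simp [mkSat]

/-- the four satisfying assignments -/
def satEquiv (C : XorEq n) : SatAssign C ≃ ZMod 2 × ZMod 2 where
  toFun α := (α.1 0, α.1 1)
  invFun p := ⟨![p.1, p.2, C.rhs - p.1 - p.2], by
    simp [Matrix.cons_val_zero, Matrix.cons_val_one]⟩
  left_inv α := by
    apply Subtype.ext
    funext s
    fin_cases s
    · simp
    · simp
    · show C.rhs - α.1 0 - α.1 1 = α.1 2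
      linear_combination -α.2
  right_inv p := by simp

lemma card_satAssign (C : XorEq n) : Fintype.card (SatAssign C) = 4 := by
  rw [Fintype.card_congr (satEquiv C)]
  simp


lemma adj_inl_inl (𝒟 : XorInstance n m) (x y : Fin n) (a b : ZMod 2) :
    (gadgetGraph 𝒟).Adj (Sum.inl (x,a)) (Sum.inl (y,b)) ↔ x = y ∧ a ≠ b := by
  simp only [gadgetGraph, exists_and_left, exists_and_right, Subtype.exists, Fin.isValue,
    SimpleGraph.fromRel_adj, ne_eq, Sum.inl.injEq, Prod.mk.injEq, not_and, exists_eq', and_true,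
    exists_eq_left', reduceCtorEq, exists_false, exists_const, and_self, and_false, or_self,
    or_false]
  constructor
  · rintro ⟨h1, h2 | h2⟩
    · exact ⟨h2.symm, h1 h2.symm⟩
    · exact ⟨h2, h1 h2⟩
  · rintro ⟨h1, h2⟩; exact ⟨fun _ => h2, Or.inr h1⟩

lemma sigma_eq_fst {𝒟 : XorInstance n m} {i j : Fin m} {α : SatAssign (𝒟 i)}
    {β : SatAssign (𝒟 j)}
    (h : (⟨i, α⟩ : Σ k, SatAssign (𝒟 k)) = ⟨j, β⟩) : i = j :=
  congrArg Sigma.fst h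

lemma sigma_eq_same {𝒟 : XorInstance n m} {i : Fin m} {α β : SatAssign (𝒟 i)}
    (h : (⟨i, α⟩ : Σ k, SatAssign (𝒟 k)) = ⟨i, β⟩) : α = β :=
  heq_iff_eq.mp (Sigma.ext_iff.mp h).2

lemma adj_inr_fst {𝒟 : XorInstance n m} {i j : Fin m} {α : SatAssign (𝒟 i)}
    {β : SatAssign (𝒟 j)}
    (h : (gadgetGraph 𝒟).Adj (Sum.inr ⟨i,α⟩) (Sum.inr ⟨j,β⟩)) : i = j := by
  rw [gadgetGraph, SimpleGraph.fromRel_adj] at h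
  obtain ⟨hne, h | h⟩ := h <;>
  · rcases h with ⟨j', a, a', h1, h2⟩ | ⟨i', α', α'', h1, h2⟩ | ⟨i', α', t, h1, h2⟩
    · exact absurd h1 (by simp)
    · have e1 := sigma_eq_fst (Sum.inr.inj h1)
      have e2 := sigma_eq_fst (Sum.inr.inj h2)
      first
        | exact e1.trans e2.symm
        | exact e2.trans e1.symm
    · exact absurd h1 (by simp)

lemma adj_inl_inr {𝒟 : XorInstance n m} (x : Fin n) (a : ZMod 2) (j : Fin m)
    (β : SatAssign (𝒟 j)) :
    (gadgetGraph 𝒟).Adj (Sum.inl (x,a)) (Sum.inr ⟨j,β⟩) ↔ ∃ t, (𝒟 j).idx t = x ∧ β.1 t = a := by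
  constructor
  · intro h
    rw [gadgetGraph, SimpleGraph.fromRel_adj] at h
    obtain ⟨hne, h | h⟩ := h <;>
      rcases h with ⟨j', a', a'', h1, h2⟩ | ⟨i', α', α'', h1, h2⟩ | ⟨i', α', t, h1, h2⟩
    · exact absurd h2 (by simp)
    · exact absurd h1 (by simp)
    · have hji : j = i' := sigma_eq_fst (Sum.inr.inj h2)
      subst hji
      have hβ : β = α' := sigma_eq_same (Sum.inr.inj h2)
      subst hβ
      obtain ⟨hx, ha⟩ := Prod.mk_inj.mp (Sum.inl.inj h1)
      exact ⟨t, hx.symm, ha.symm⟩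
    · exact absurd h1 (by simp)
    · exact absurd h2 (by simp)
    · exact absurd h2 (by simp)
  · rintro ⟨t, h1, h2⟩
    rw [gadgetGraph, SimpleGraph.fromRel_adj]
    refine ⟨by simp, Or.inl (Or.inr (Or.inr ⟨j, β, t, ?_, rfl⟩))⟩
    rw [h1, h2]

lemma adj_inr_same (𝒟 : XorInstance n m) (i : Fin m) (α β : SatAssign (𝒟 i)) (hab : α ≠ β) :
    (gadgetGraph 𝒟).Adj (Sum.inr ⟨i,α⟩) (Sum.inr ⟨i,β⟩) := by
  rw [gadgetGraph, SimpleGraph.fromRel_adj]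
  constructor
  · intro h
    exact hab (sigma_eq_same (Sum.inr.inj h))
  · exact Or.inl (Or.inr (Or.inl ⟨i, α, β, rfl, rfl⟩))

lemma adj_var (𝒟 : XorInstance n m) (x : Fin n) :
    (gadgetGraph 𝒟).Adj (Sum.inl (x,0)) (Sum.inl (x,1)) :=
  (adj_inl_inl 𝒟 x x 0 1).mpr ⟨rfl, by decide⟩

lemma mem_edges {V : Type*} [Fintype V] {G : SimpleGraph V} {u v : V} :
    s(u,v) ∈ edges G ↔ G.Adj u v := by
  simp [edges, SimpleGraph.mem_edgeSet]

lemma card_sym2_sat (𝒟 : XorInstance n m) (i : Fin m) :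
    Fintype.card (Sym2 (SatAssign (𝒟 i))) = 10 := by
  rw [Sym2.card, card_satAssign]; rfl

lemma edges_card_le (𝒟 : XorInstance n m) :
    (edges (gadgetGraph 𝒟)).card ≤ n + 22 * m := by
  classical
  set I1 : Finset (Sym2 (GVert 𝒟)) :=
    Finset.univ.image (fun x : Fin n => s(Sum.inl (x,0), Sum.inl (x,1))) with hI1
  set I2 : Finset (Sym2 (GVert 𝒟)) :=
    Finset.univ.image (fun w : Σ i : Fin m, Sym2 (SatAssign (𝒟 i)) =>
      Sym2.map (fun α => (Sum.inr ⟨w.1, α⟩ : GVert 𝒟)) w.2) with hI2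
  set I3 : Finset (Sym2 (GVert 𝒟)) :=
    Finset.univ.image (fun z : (Σ i : Fin m, SatAssign (𝒟 i)) × Fin 3 =>
      s(Sum.inl ((𝒟 z.1.1).idx z.2, z.1.2.1 z.2), Sum.inr z.1)) with hI3
  have hsub : edges (gadgetGraph 𝒟) ⊆ I1 ∪ I2 ∪ I3 := by
    intro e he
    induction e using Sym2.ind with
    | _ u v =>
      have hadj : (gadgetGraph 𝒟).Adj u v := mem_edges.mp he
      rcases u with ⟨x,a⟩ | ⟨i,α⟩ <;> rcases v with ⟨y,b⟩ | ⟨j,β⟩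
      · obtain ⟨rfl, hab⟩ := (adj_inl_inl 𝒟 x y a b).mp hadj
        refine Finset.mem_union_left _ (Finset.mem_union_left _ ?_)
        rw [hI1, Finset.mem_image]
        rcases zmod2_cases a with rfl | rfl <;> rcases zmod2_cases b with rfl | rfl
        · exact absurd rfl hab
        · exact ⟨x, Finset.mem_univ _, rfl⟩
        · exact ⟨x, Finset.mem_univ _, Sym2.eq_swap⟩
        · exact absurd rfl hab
      · obtain ⟨t, ht, hb⟩ := (adj_inl_inr x a j β).mp hadj
        refine Finset.mem_union_right _ ?_
        rw [hI3, Finset.mem_image]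
        exact ⟨(⟨j, β⟩, t), Finset.mem_univ _, by rw [ht, hb]⟩
      · obtain ⟨t, ht, hb⟩ := (adj_inl_inr y b i α).mp hadj.symm
        refine Finset.mem_union_right _ ?_
        rw [hI3, Finset.mem_image]
        exact ⟨(⟨i, α⟩, t), Finset.mem_univ _, by rw [ht, hb, Sym2.eq_swap]⟩
      · obtain rfl := adj_inr_fst hadj
        refine Finset.mem_union_left _ (Finset.mem_union_right _ ?_)
        rw [hI2, Finset.mem_image]
        exact ⟨⟨i, s(α, β)⟩, Finset.mem_univ _, by rw [Sym2.map_pair_eq]⟩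
  calc (edges (gadgetGraph 𝒟)).card ≤ (I1 ∪ I2 ∪ I3).card := Finset.card_le_card hsub
    _ ≤ I1.card + I2.card + I3.card := by
        refine (Finset.card_union_le _ _).trans ?_
        exact Nat.add_le_add_right (Finset.card_union_le _ _) _
    _ ≤ n + 22 * m := by
        have h1 : I1.card ≤ n := by
          refine (Finset.card_image_le).trans ?_
          simp
        have h2 : I2.card ≤ 10 * m := by
          refine (Finset.card_image_le).trans ?_
          rw [Finset.card_univ, Fintype.card_sigma]
          simp [card_sym2_sat 𝒟]
          omega
        have h3 : I3.card ≤ 12 * m := by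
          refine (Finset.card_image_le).trans ?_
          rw [Finset.card_univ, Fintype.card_prod, Fintype.card_sigma]
          simp [card_satAssign]
          omega
        omega

lemma mem_tripleOf {C : XorEq n} {x : Fin n} : x ∈ tripleOf C ↔ ∃ t, C.idx t = x := by
  simp only [tripleOf, Finset.mem_insert, Finset.mem_singleton]
  constructor
  · rintro (h | h | h)
    exacts [⟨0, h.symm⟩, ⟨1, h.symm⟩, ⟨2, h.symm⟩]
  · rintro ⟨t, rfl⟩
    fin_cases t
    exacts [Or.inl rfl, Or.inr (Or.inl rfl), Or.inr (Or.inr rfl)]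

lemma card_tripleOf (C : XorEq n) : (tripleOf C).card = 3 := by
  have h01 : C.idx 0 ≠ C.idx 1 := fun h => by have := C.inj h; simp at this
  have h02 : C.idx 0 ≠ C.idx 2 := fun h => by have := C.inj h; simp at this
  have h12 : C.idx 1 ≠ C.idx 2 := fun h => by have := C.inj h; simp at this
  rw [tripleOf]
  rw [Finset.card_insert_of_notMem (by simp [h01, h02]),
    Finset.card_insert_of_notMem (by simp [h12]), Finset.card_singleton]

lemma hdeg_eq {𝒞 : XorInstance n m}
    (hedges : Function.Injective fun i : Fin m => tripleOf (𝒞 i)) (x : Fin n) :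
    hdeg (Finset.univ.image fun i : Fin m => tripleOf (𝒞 i)) x
      = (Finset.univ.filter fun i => x ∈ tripleOf (𝒞 i)).card := by
  rw [hdeg]
  have himg : (Finset.univ.image fun i : Fin m => tripleOf (𝒞 i)).filter (fun e => x ∈ e)
      = (Finset.univ.filter fun i => x ∈ tripleOf (𝒞 i)).image (fun i => tripleOf (𝒞 i)) := by
    ext e
    simp only [Finset.mem_filter, Finset.mem_image, Finset.mem_univ, true_and]
    constructor
    · rintro ⟨⟨i, rfl⟩, hx⟩; exact ⟨i, hx, rfl⟩
    · rintro ⟨i, hx, rfl⟩; exact ⟨⟨i, rfl⟩, hx⟩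
  rw [himg, Finset.card_image_of_injective _ hedges]

lemma GIval_le_one {V W : Type*} [Fintype V] [Fintype W] (G : SimpleGraph V) (H : SimpleGraph W)
    (π : V ≃ W) : GIval G H π ≤ 1 := by
  rw [GIval]
  apply div_le_one_of_le₀
  · exact le_trans (Nat.cast_le.mpr (Finset.card_filter_le _ _)) (le_max_left _ _)
  · exact le_max_of_le_left (Nat.cast_nonneg _)

lemma GI_le_one {V W : Type*} [Fintype V] [Fintype W] (G : SimpleGraph V) (H : SimpleGraph W) :
    GI G H ≤ 1 :=
  Real.iSup_le (fun π => GIval_le_one G H π) zero_le_one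

lemma card_gvert (𝒟 : XorInstance n m) : Fintype.card (GVert 𝒟) = 2 * n + 4 * m := by
  rw [Fintype.card_sum, Fintype.card_prod, Fintype.card_sigma]
  simp [card_satAssign, ZMod.card, Fintype.card_fin, mul_comm]

lemma gvert_equiv_nonempty (𝒞 : XorInstance n m) :
    Nonempty (GVert 𝒞 ≃ GVert (homogInst 𝒞)) := by
  rw [← Fintype.card_eq]
  rw [card_gvert, card_gvert]

lemma exists_GIval_max (𝒞 : XorInstance n m) :
    ∃ π : GVert 𝒞 ≃ GVert (homogInst 𝒞),
      GI (gadgetGraph 𝒞) (gadgetGraph (homogInst 𝒞)) ≤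
        GIval (gadgetGraph 𝒞) (gadgetGraph (homogInst 𝒞)) π := by
  have hne := gvert_equiv_nonempty 𝒞
  obtain ⟨π₀, hmax⟩ := Finite.exists_max (GIval (gadgetGraph 𝒞) (gadgetGraph (homogInst 𝒞)))
  exact ⟨π₀, ciSup_le hmax⟩

-- ZMod 2 helpers
lemma zmod2_ne {a b : ZMod 2} (h : a ≠ b) : b = a + 1 := by revert a b; decide
lemma zmod2_add_eq_zero {s r : ZMod 2} (h : s + r = 0) : s = r := by revert s r; decide
lemma zmod2_or (u v : ZMod 2) : u = v ∨ u = v + 1 := by revert u v; decide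
lemma zmod2_succ_ne (b : ZMod 2) : b + 1 ≠ b := by revert b; decide

section decode

variable {𝒞 : XorInstance n m} {π : GVert 𝒞 ≃ GVert (homogInst 𝒞)}

/-- the set of preserved edges -/
def Pres (𝒞 : XorInstance n m) (π : GVert 𝒞 ≃ GVert (homogInst 𝒞)) : Finset (Sym2 (GVert 𝒞)) :=
  (edges (gadgetGraph 𝒞)).filter fun e =>
    Sym2.map (fun x => π x) e ∈ edges (gadgetGraph (homogInst 𝒞))

lemma memPres {u v : GVert 𝒞} (h : s(u,v) ∈ Pres 𝒞 π) :
    (gadgetGraph 𝒞).Adj u v ∧ (gadgetGraph (homogInst 𝒞)).Adj (π u) (π v) := by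
  rw [Pres, Finset.mem_filter, Sym2.map_pair_eq] at h
  exact ⟨mem_edges.mp h.1, mem_edges.mp h.2⟩

/-- decoded assignment -/
def tau (π : GVert 𝒞 ≃ GVert (homogInst 𝒞)) (x : Fin n) : ZMod 2 :=
  Sum.elim Prod.snd (fun _ => 0) (π (Sum.inl (x, 0)))

/-- all edges of the gadget of equation `i` (together with the variable edges of
its three variables) are preserved -/
def GoodEq (𝒞 : XorInstance n m) (π : GVert 𝒞 ≃ GVert (homogInst 𝒞)) (i : Fin m) : Prop :=
  (∀ α β : SatAssign (𝒞 i), α ≠ β →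
    s(Sum.inr ⟨i,α⟩, Sum.inr ⟨i,β⟩) ∈ Pres 𝒞 π) ∧
  (∀ (α : SatAssign (𝒞 i)) (t : Fin 3),
    s(Sum.inl ((𝒞 i).idx t, α.1 t), Sum.inr ⟨i,α⟩) ∈ Pres 𝒞 π) ∧
  (∀ t : Fin 3, s(Sum.inl ((𝒞 i).idx t, 0), Sum.inl ((𝒞 i).idx t, 1)) ∈ Pres 𝒞 π)

lemma stepA {i : Fin m} (hg : GoodEq 𝒞 π i) (α : SatAssign (𝒞 i)) :
    ∃ p : Σ k, SatAssign (homogInst 𝒞 k), π (Sum.inr ⟨i, α⟩) = Sum.inr p := by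
  rcases hπα : π (Sum.inr ⟨i,α⟩) with ⟨y,b⟩ | p
  case inr => exact ⟨p, rfl⟩
  exfalso
  -- three other satisfying assignments
  have hcard : ((Finset.univ : Finset (SatAssign (𝒞 i))).erase α).card = 3 := by
    rw [Finset.card_erase_of_mem (Finset.mem_univ α), Finset.card_univ, card_satAssign]
  obtain ⟨β₁, β₂, β₃, h12, h13, h23, hset⟩ := Finset.card_eq_three.mp hcard
  have hβ : ∀ β ∈ ({β₁, β₂, β₃} : Finset (SatAssign (𝒞 i))), β ≠ α := by
    rw [← hset]; intro β hβ'; exact Finset.ne_of_mem_erase hβ'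
  have hβ1 := hβ β₁ (by simp)
  have hβ2 := hβ β₂ (by simp)
  have hβ3 := hβ β₃ (by simp)
  -- every other image is adjacent to inl (y,b)
  have hadjb : ∀ β : SatAssign (𝒞 i), β ≠ α →
      (gadgetGraph (homogInst 𝒞)).Adj (π (Sum.inr ⟨i,β⟩)) (Sum.inl (y,b)) := by
    intro β hne
    have h := (memPres (hg.1 β α hne)).2
    rwa [hπα] at h
  -- shape of each image
  have himg : ∀ β : SatAssign (𝒞 i), β ≠ α →
      (π (Sum.inr ⟨i,β⟩) = Sum.inl (y, b+1)) ∨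
      (∃ (j : Fin m) (δ : SatAssign (homogInst 𝒞 j)) (t : Fin 3),
        π (Sum.inr ⟨i,β⟩) = Sum.inr ⟨j,δ⟩ ∧ (homogInst 𝒞 j).idx t = y ∧ δ.1 t = b) := by
    intro β hne
    rcases h' : π (Sum.inr ⟨i,β⟩) with ⟨z,c⟩ | ⟨j,δ⟩
    · left
      have h2 := hadjb β hne
      rw [h'] at h2
      obtain ⟨rfl, hc⟩ := (adj_inl_inl _ z y c b).mp h2
      rw [zmod2_ne fun hh => hc hh.symm]
    · right
      have h2 := hadjb β hne
      rw [h'] at h2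
      obtain ⟨t, ht, hv⟩ := (adj_inl_inr y b j δ).mp h2.symm
      exact ⟨j, δ, t, rfl, ht, hv⟩
  by_cases hc : ∃ β : SatAssign (𝒞 i), β ≠ α ∧ π (Sum.inr ⟨i,β⟩) = Sum.inl (y, b+1)
  · -- one image is the partner vertex; any further one gives a contradiction
    obtain ⟨β₀, hβ₀ne, hβ₀⟩ := hc
    -- pick β' ∉ {α, β₀}
    have hcard2 : (((Finset.univ : Finset (SatAssign (𝒞 i))).erase α).erase β₀).Nonempty := by
      rw [← Finset.card_pos]
      have h1 : ((Finset.univ : Finset (SatAssign (𝒞 i))).erase α).card = 3 := hcard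
      have := Finset.card_erase_le (s := (Finset.univ : Finset (SatAssign (𝒞 i))).erase α)
        (a := β₀)
      have h2 := Finset.pred_card_le_card_erase
        (s := (Finset.univ : Finset (SatAssign (𝒞 i))).erase α) (a := β₀)
      omega
    obtain ⟨β', hβ'⟩ := hcard2
    have hβ'β₀ : β' ≠ β₀ := Finset.ne_of_mem_erase hβ'
    have hβ'α : β' ≠ α := Finset.ne_of_mem_erase (Finset.mem_of_mem_erase hβ')
    rcases himg β' hβ'α with h' | ⟨j, δ, t, h', ht, hv⟩
    · exact hβ'β₀ (π.injective (by rw [h', hβ₀]) |> Sum.inr.inj |> sigma_eq_same)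
    · -- β' image is a constraint vertex adjacent to both (y,b) and (y,b+1)
      have hadj2 := (memPres (hg.1 β' β₀ hβ'β₀)).2
      rw [h', hβ₀] at hadj2
      obtain ⟨s, hs, hv2⟩ := (adj_inl_inr y (b+1) j δ).mp hadj2.symm
      have hts : t = s := (homogInst 𝒞 j).inj (by rw [ht, hs])
      rw [← hts] at hv2
      rw [hv] at hv2
      exact zmod2_succ_ne b hv2.symm
  · -- all three images are constraint vertices
    push_neg at hc
    have himg' : ∀ β : SatAssign (𝒞 i), β ≠ α →
        ∃ (j : Fin m) (δ : SatAssign (homogInst 𝒞 j)) (t : Fin 3),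
          π (Sum.inr ⟨i,β⟩) = Sum.inr ⟨j,δ⟩ ∧ (homogInst 𝒞 j).idx t = y ∧ δ.1 t = b := by
      intro β hne
      rcases himg β hne with h' | h'
      · exact absurd h' (hc β hne)
      · exact h'
    obtain ⟨j₁, δ₁, t₁, e₁, ht₁, hv₁⟩ := himg' β₁ hβ1
    obtain ⟨j₂, δ₂, t₂, e₂, ht₂, hv₂⟩ := himg' β₂ hβ2
    obtain ⟨j₃, δ₃, t₃, e₃, ht₃, hv₃⟩ := himg' β₃ hβ3
    -- all in the same block
    have hadj12 := (memPres (hg.1 β₁ β₂ h12)).2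
    rw [e₁, e₂] at hadj12
    obtain rfl := adj_inr_fst hadj12
    have hadj13 := (memPres (hg.1 β₁ β₃ h13)).2
    rw [e₁, e₃] at hadj13
    obtain rfl := adj_inr_fst hadj13
    -- same coordinate
    have ht12 : t₁ = t₂ := (homogInst 𝒞 j₁).inj (by rw [ht₁, ht₂])
    have ht13 : t₁ = t₃ := (homogInst 𝒞 j₁).inj (by rw [ht₁, ht₃])
    rw [← ht12] at hv₂
    rw [← ht13] at hv₃
    -- the δ's are distinct
    have hd12 : δ₁ ≠ δ₂ := fun hh =>
      h12 (π.injective (by rw [e₁, e₂, hh]) |> Sum.inr.inj |> sigma_eq_same)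
    have hd13 : δ₁ ≠ δ₃ := fun hh =>
      h13 (π.injective (by rw [e₁, e₃, hh]) |> Sum.inr.inj |> sigma_eq_same)
    have hd23 : δ₂ ≠ δ₃ := fun hh =>
      h23 (π.injective (by rw [e₂, e₃, hh]) |> Sum.inr.inj |> sigma_eq_same)
    exact satAssign_not_three hd12 hd13 hd23 hv₁ hv₂ hv₃

lemma homog_idx (𝒞 : XorInstance n m) (i : Fin m) : (homogInst 𝒞 i).idx = (𝒞 i).idx := rfl

lemma homog_rhs (𝒞 : XorInstance n m) (i : Fin m) : (homogInst 𝒞 i).rhs = 0 := rfl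

lemma stepB {i : Fin m} (hg : GoodEq 𝒞 π i) :
    ∃ i' : Fin m, ∀ α : SatAssign (𝒞 i), ∃ α' : SatAssign (homogInst 𝒞 i'),
      π (Sum.inr ⟨i, α⟩) = Sum.inr ⟨i', α'⟩ := by
  obtain ⟨⟨i', α₀'⟩, h0⟩ := stepA hg (mkSat (𝒞 i) 0 ((𝒞 i).rhs))
  refine ⟨i', fun α => ?_⟩
  by_cases hα : α = mkSat (𝒞 i) 0 ((𝒞 i).rhs)
  · exact ⟨α₀', by rw [hα, h0]⟩
  · obtain ⟨⟨j, α'⟩, hj⟩ := stepA hg α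
    have hadj := (memPres (hg.1 α _ hα)).2
    rw [hj, h0] at hadj
    obtain rfl := adj_inr_fst hadj
    exact ⟨α', hj⟩

/-- the heart of the proof: a good equation is satisfied by the decoded assignment -/
lemma good_sat {i : Fin m} (hg : GoodEq 𝒞 π i) : satisfies (tau π) (𝒞 i) := by
  obtain ⟨i', hB⟩ := stepB hg
  choose F hF using hB
  have hFinj : Function.Injective F := by
    intro a b hab
    have : π (Sum.inr ⟨i, a⟩) = π (Sum.inr ⟨i, b⟩) := by rw [hF a, hF b, hab]
    exact sigma_eq_same (Sum.inr.inj (π.injective this))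
  have hFsurj : Function.Surjective F :=
    ((Fintype.bijective_iff_injective_and_card F).mpr
      ⟨hFinj, by rw [card_satAssign, card_satAssign]⟩).surjective
  -- images of variable vertices are variable vertices
  have stepC : ∀ (t : Fin 3) (a : ZMod 2), ∃ y v,
      π (Sum.inl ((𝒞 i).idx t, a)) = Sum.inl (y, v) := by
    intro t a
    rcases h' : π (Sum.inl ((𝒞 i).idx t, a)) with ⟨y,v⟩ | ⟨j,δ⟩
    · exact ⟨y, v, rfl⟩
    exfalso
    have hval : (mkSat (𝒞 i) t a).1 t = a := mkSat_val _ _ _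
    have hcons := (memPres (hg.2.1 (mkSat (𝒞 i) t a) t)).2
    rw [hval, h', hF] at hcons
    obtain rfl := adj_inr_fst hcons
    obtain ⟨β, hβ⟩ := hFsurj δ
    have : π (Sum.inl ((𝒞 i).idx t, a)) = π (Sum.inr ⟨i, β⟩) := by
      rw [h', hF, hβ]
    exact absurd (π.injective this) (by simp)
  choose Y Vv hYV using stepC
  -- partner coherence from the variable edges
  have hpart : ∀ t : Fin 3, Y t 1 = Y t 0 ∧ Vv t 1 = Vv t 0 + 1 := by
    intro t
    have h := (memPres (hg.2.2 t)).2
    rw [hYV t 0, hYV t 1] at h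
    obtain ⟨hy, hv⟩ := (adj_inl_inl _ _ _ _ _).mp h
    exact ⟨hy.symm, zmod2_ne hv⟩
  have htau : ∀ t : Fin 3, tau π ((𝒞 i).idx t) = Vv t 0 := by
    intro t
    rw [tau, hYV t 0]; rfl
  have himgvar : ∀ (t : Fin 3) (a : ZMod 2),
      π (Sum.inl ((𝒞 i).idx t, a)) = Sum.inl (Y t 0, tau π ((𝒞 i).idx t) + a) := by
    intro t a
    rcases zmod2_cases a with rfl | rfl
    · rw [hYV t 0, htau t, add_zero]
    · rw [hYV t 1, (hpart t).1, (hpart t).2, htau t]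
  -- the coordinate permutation
  set α₀ : SatAssign (𝒞 i) := mkSat (𝒞 i) 0 ((𝒞 i).rhs) with hα₀
  have stepD : ∀ t : Fin 3, ∃ s : Fin 3, (homogInst 𝒞 i').idx s = Y t 0 ∧
      (F α₀).1 s = tau π ((𝒞 i).idx t) + α₀.1 t := by
    intro t
    have h := (memPres (hg.2.1 α₀ t)).2
    rw [himgvar t (α₀.1 t), hF α₀] at h
    exact (adj_inl_inr _ _ _ _).mp h
  choose T hT1 hT2 using stepD
  have hTinj : Function.Injective T := by
    intro t s hts
    by_contra hne
    have hy : Y t 0 = Y s 0 := by rw [← hT1 t, ← hT1 s, hts]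
    have hxne : (𝒞 i).idx t ≠ (𝒞 i).idx s := fun hh => hne ((𝒞 i).inj hh)
    rcases zmod2_or (tau π ((𝒞 i).idx t)) (tau π ((𝒞 i).idx s)) with hv | hv
    · have : π (Sum.inl ((𝒞 i).idx t, 0)) = π (Sum.inl ((𝒞 i).idx s, 0)) := by
        rw [himgvar t 0, himgvar s 0, hy, hv]
      have := π.injective this
      simp only [Sum.inl.injEq, Prod.mk.injEq] at this
      exact hxne this.1
    · have : π (Sum.inl ((𝒞 i).idx t, 0)) = π (Sum.inl ((𝒞 i).idx s, 1)) := by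
        rw [himgvar t 0, himgvar s 1, hy, hv]
        rw [add_zero]
      have := π.injective this
      simp only [Sum.inl.injEq, Prod.mk.injEq] at this
      exact hxne this.1
  have hTbij : Function.Bijective T := Finite.injective_iff_bijective.mp hTinj
  -- summing up
  have hsum0 : (F α₀).1 0 + (F α₀).1 1 + (F α₀).1 2 = 0 := (F α₀).2
  have hreindex : ∑ t : Fin 3, (F α₀).1 (T t) = ∑ t : Fin 3, (F α₀).1 t :=
    Fintype.sum_bijective T hTbij _ _ (fun t => rfl)
  rw [Fin.sum_univ_three, Fin.sum_univ_three] at hreindex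
  rw [hT2 0, hT2 1, hT2 2, hsum0] at hreindex
  have hα₀sum : α₀.1 0 + α₀.1 1 + α₀.1 2 = (𝒞 i).rhs := α₀.2
  have : (tau π ((𝒞 i).idx 0) + tau π ((𝒞 i).idx 1) + tau π ((𝒞 i).idx 2)) + (𝒞 i).rhs = 0 := by
    rw [← hα₀sum, ← hreindex]; ring
  exact zmod2_add_eq_zero this


/-- the bad (non-preserved) edges -/
def badG (𝒞 : XorInstance n m) (π : GVert 𝒞 ≃ GVert (homogInst 𝒞)) : Finset (Sym2 (GVert 𝒞)) :=
  edges (gadgetGraph 𝒞) \ Pres 𝒞 π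

/-- variables whose variable edge is not preserved -/
def BvSet (𝒞 : XorInstance n m) (π : GVert 𝒞 ≃ GVert (homogInst 𝒞)) : Finset (Fin n) :=
  Finset.univ.filter fun x : Fin n => s(Sum.inl (x,0), Sum.inl (x,1)) ∉ Pres 𝒞 π

lemma varEdge_mem (𝒟 : XorInstance n m) (x : Fin n) :
    s((Sum.inl (x,0) : GVert 𝒟), Sum.inl (x,1)) ∈ edges (gadgetGraph 𝒟) :=
  mem_edges.mpr (adj_var 𝒟 x)

lemma varEdge_inj (𝒟 : XorInstance n m) :
    Function.Injective (fun x : Fin n => s((Sum.inl (x,0) : GVert 𝒟), Sum.inl (x,1))) := by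
  intro x y h
  rcases Sym2.eq_iff.mp h with ⟨h1, _⟩ | ⟨h1, _⟩ <;>
    exact (Prod.mk_inj.mp (Sum.inl.inj h1)).1

lemma le_edges_card (𝒟 : XorInstance n m) : n ≤ (edges (gadgetGraph 𝒟)).card := by
  have := Finset.card_le_card_of_injOn (s := (Finset.univ : Finset (Fin n)))
    (fun x : Fin n => s((Sum.inl (x,0) : GVert 𝒟), Sum.inl (x,1)))
    (fun x _ => varEdge_mem 𝒟 x) ((varEdge_inj 𝒟).injOn)
  simpa using this

lemma card_BvSet_le : (BvSet 𝒞 π).card ≤ (badG 𝒞 π).card := by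
  refine Finset.card_le_card_of_injOn
    (fun x : Fin n => s((Sum.inl (x,0) : GVert 𝒞), Sum.inl (x,1))) ?_ ((varEdge_inj 𝒞).injOn)
  intro x hx
  rw [Finset.mem_coe, BvSet, Finset.mem_filter] at hx
  rw [Finset.mem_coe, badG, Finset.mem_sdiff]
  exact ⟨varEdge_mem 𝒞 x, hx.2⟩

/-- an edge of the gadget graph involves the block of at most one equation -/
lemma owners_le_one {e : Sym2 (GVert 𝒞)} (he : e ∈ edges (gadgetGraph 𝒞)) :
    (Finset.univ.filter fun i : Fin m =>
      ∃ α : SatAssign (𝒞 i), Sum.inr ⟨i,α⟩ ∈ e).card ≤ 1 := by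
  rw [Finset.card_le_one]
  intro i hi j hj
  rw [Finset.mem_filter] at hi hj
  obtain ⟨α, hα⟩ := hi.2
  obtain ⟨β, hβ⟩ := hj.2
  induction e using Sym2.ind with
  | _ u v =>
    have hadj : (gadgetGraph 𝒞).Adj u v := mem_edges.mp he
    rw [Sym2.mem_iff] at hα hβ
    rcases hα with rfl | rfl <;> rcases hβ with h | h
    · exact (sigma_eq_fst (Sum.inr.inj h)).symm
    · rw [← h] at hadj
      exact adj_inr_fst hadj
    · rw [← h] at hadj
      exact (adj_inr_fst hadj).symm
    · exact (sigma_eq_fst (Sum.inr.inj h)).symm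

lemma card_badEq_le :
    ((Finset.univ.filter fun i : Fin m => ¬ GoodEq 𝒞 π i).card : ℕ) ≤
      (badG 𝒞 π).card + ∑ x ∈ BvSet 𝒞 π,
        (Finset.univ.filter fun i : Fin m => x ∈ tripleOf (𝒞 i)).card := by
  have hsub : (Finset.univ.filter fun i : Fin m => ¬ GoodEq 𝒞 π i) ⊆
      ((badG 𝒞 π).biUnion fun e => Finset.univ.filter fun i : Fin m =>
        ∃ α : SatAssign (𝒞 i), Sum.inr ⟨i,α⟩ ∈ e) ∪
      ((BvSet 𝒞 π).biUnion fun x => Finset.univ.filter fun i : Fin m => x ∈ tripleOf (𝒞 i)) := by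
    intro i hi
    rw [Finset.mem_filter] at hi
    rw [Finset.mem_union]
    by_cases hc3 : ∀ t : Fin 3, s((Sum.inl ((𝒞 i).idx t, 0) : GVert 𝒞),
        Sum.inl ((𝒞 i).idx t, 1)) ∈ Pres 𝒞 π
    · left
      -- then clause 1 or 2 fails
      have : (∃ (α β : SatAssign (𝒞 i)), α ≠ β ∧
            s((Sum.inr ⟨i,α⟩ : GVert 𝒞), Sum.inr ⟨i,β⟩) ∉ Pres 𝒞 π) ∨
          (∃ (α : SatAssign (𝒞 i)) (t : Fin 3),
            s((Sum.inl ((𝒞 i).idx t, α.1 t) : GVert 𝒞), Sum.inr ⟨i,α⟩) ∉ Pres 𝒞 π) := by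
        by_cases hc1 : ∀ (α β : SatAssign (𝒞 i)), α ≠ β →
            s((Sum.inr ⟨i,α⟩ : GVert 𝒞), Sum.inr ⟨i,β⟩) ∈ Pres 𝒞 π
        · right
          have hc2 : ¬ ∀ (α : SatAssign (𝒞 i)) (t : Fin 3),
              s((Sum.inl ((𝒞 i).idx t, α.1 t) : GVert 𝒞), Sum.inr ⟨i,α⟩) ∈ Pres 𝒞 π :=
            fun hc2 => hi.2 ⟨hc1, hc2, hc3⟩
          push_neg at hc2
          exact hc2
        · left
          push_neg at hc1
          exact hc1
      rw [Finset.mem_biUnion]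
      rcases this with ⟨α, β, hne, hbad⟩ | ⟨α, t, hbad⟩
      · refine ⟨s((Sum.inr ⟨i,α⟩ : GVert 𝒞), Sum.inr ⟨i,β⟩), ?_, ?_⟩
        · rw [badG, Finset.mem_sdiff]
          exact ⟨mem_edges.mpr (adj_inr_same 𝒞 i α β hne), hbad⟩
        · rw [Finset.mem_filter]
          exact ⟨Finset.mem_univ _, α, by rw [Sym2.mem_iff]; left; rfl⟩
      · refine ⟨s((Sum.inl ((𝒞 i).idx t, α.1 t) : GVert 𝒞), Sum.inr ⟨i,α⟩), ?_, ?_⟩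
        · rw [badG, Finset.mem_sdiff]
          refine ⟨mem_edges.mpr ((adj_inl_inr _ _ _ _).mpr ⟨t, rfl, rfl⟩), hbad⟩
        · rw [Finset.mem_filter]
          exact ⟨Finset.mem_univ _, α, by rw [Sym2.mem_iff]; right; rfl⟩
    · right
      push_neg at hc3
      obtain ⟨t, ht⟩ := hc3
      rw [Finset.mem_biUnion]
      refine ⟨(𝒞 i).idx t, ?_, ?_⟩
      · rw [BvSet, Finset.mem_filter]
        exact ⟨Finset.mem_univ _, ht⟩
      · rw [Finset.mem_filter]
        exact ⟨Finset.mem_univ _, mem_tripleOf.mpr ⟨t, rfl⟩⟩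
  refine (Finset.card_le_card hsub).trans ?_
  refine (Finset.card_union_le _ _).trans ?_
  have h1 : ((badG 𝒞 π).biUnion fun e => Finset.univ.filter fun i : Fin m =>
      ∃ α : SatAssign (𝒞 i), Sum.inr ⟨i,α⟩ ∈ e).card ≤ (badG 𝒞 π).card := by
    refine (Finset.card_biUnion_le).trans ?_
    calc ∑ e ∈ badG 𝒞 π, (Finset.univ.filter fun i : Fin m =>
          ∃ α : SatAssign (𝒞 i), Sum.inr ⟨i,α⟩ ∈ e).card
        ≤ ∑ _e ∈ badG 𝒞 π, 1 := by
          refine Finset.sum_le_sum fun e he => ?_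
          rw [badG, Finset.mem_sdiff] at he
          exact owners_le_one he.1
      _ = (badG 𝒞 π).card := by rw [Finset.sum_const, smul_eq_mul, mul_one]
  have h2 := Finset.card_biUnion_le (s := BvSet 𝒞 π)
    (t := fun x => Finset.univ.filter fun i : Fin m => x ∈ tripleOf (𝒞 i))
  omega


end decode

-- the trivial 3XOR bound: some assignment satisfies at least half of the equations
lemma add11 (u : ZMod 2) : u + 1 + 1 = u := by revert u; decide

lemma zmod2_flip (u r : ZMod 2) : u + 1 = r ↔ ¬ u = r := by revert u r; decide

lemma count_sat_eq (C : XorEq n) :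
    2 * (Finset.univ.filter fun τ : Fin n → ZMod 2 => satisfies τ C).card
      = Fintype.card (Fin n → ZMod 2) := by
  classical
  have hswap : ∀ τ : Fin n → ZMod 2,
      satisfies (Function.update τ (C.idx 0) (τ (C.idx 0) + 1)) C ↔ ¬ satisfies τ C := by
    intro τ
    have h01 : C.idx 1 ≠ C.idx 0 := fun h => by have := C.inj h; simp at this
    have h02 : C.idx 2 ≠ C.idx 0 := fun h => by have := C.inj h; simp at this
    rw [satisfies, satisfies, Function.update_self, Function.update_of_ne h01,
      Function.update_of_ne h02]
    have : τ (C.idx 0) + 1 + τ (C.idx 1) + τ (C.idx 2)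
        = (τ (C.idx 0) + τ (C.idx 1) + τ (C.idx 2)) + 1 := by ring
    rw [this]
    exact zmod2_flip _ _
  have hbij : (Finset.univ.filter fun τ : Fin n → ZMod 2 => satisfies τ C).card
      = (Finset.univ.filter fun τ : Fin n → ZMod 2 => ¬ satisfies τ C).card := by
    refine Finset.card_bij' (fun τ _ => Function.update τ (C.idx 0) (τ (C.idx 0) + 1))
      (fun τ _ => Function.update τ (C.idx 0) (τ (C.idx 0) + 1)) ?_ ?_ ?_ ?_
    · intro τ hτ
      rw [Finset.mem_filter] at hτ ⊢
      exact ⟨Finset.mem_univ _, fun hs => ((hswap τ).mp hs) hτ.2⟩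
    · intro τ hτ
      rw [Finset.mem_filter] at hτ ⊢
      exact ⟨Finset.mem_univ _, (hswap τ).mpr hτ.2⟩
    · intro τ _
      funext y
      by_cases hy : y = C.idx 0
      · subst hy
        simp only [Function.update_self]
        exact add11 (τ (C.idx 0))
      · simp [Function.update_of_ne hy]
    · intro τ _
      funext y
      by_cases hy : y = C.idx 0
      · subst hy
        simp only [Function.update_self]
        exact add11 (τ (C.idx 0))
      · simp [Function.update_of_ne hy]
  have hsplit := Finset.card_filter_add_card_filter_not
    (s := (Finset.univ : Finset (Fin n → ZMod 2))) (p := fun τ => satisfies τ C)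
  rw [Finset.card_univ] at hsplit
  omega

lemma exists_half (𝒞 : XorInstance n m) :
    ∃ τ : Fin n → ZMod 2,
      m ≤ 2 * (Finset.univ.filter fun i : Fin m => satisfies τ (𝒞 i)).card := by
  classical
  have hdc : ∑ τ : Fin n → ZMod 2, (Finset.univ.filter fun i : Fin m => satisfies τ (𝒞 i)).card
      = ∑ i : Fin m, (Finset.univ.filter fun τ : Fin n → ZMod 2 => satisfies τ (𝒞 i)).card := by
    simp_rw [Finset.card_filter]
    rw [Finset.sum_comm]
  obtain ⟨τ₀, hτ₀⟩ := Finite.exists_max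
    (fun τ : Fin n → ZMod 2 => (Finset.univ.filter fun i : Fin m => satisfies τ (𝒞 i)).card)
  refine ⟨τ₀, ?_⟩
  have h1 : ∑ i : Fin m, 2 * (Finset.univ.filter fun τ : Fin n → ZMod 2 =>
      satisfies τ (𝒞 i)).card = m * Fintype.card (Fin n → ZMod 2) := by
    rw [Finset.sum_congr rfl (fun i _ => count_sat_eq (𝒞 i)), Finset.sum_const,
      Finset.card_univ, Fintype.card_fin, smul_eq_mul]
  have h2 : ∑ τ : Fin n → ZMod 2, (Finset.univ.filter fun i : Fin m =>
      satisfies τ (𝒞 i)).card ≤ Fintype.card (Fin n → ZMod 2) *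
        (Finset.univ.filter fun i : Fin m => satisfies τ₀ (𝒞 i)).card := by
    calc _ ≤ ∑ _τ : Fin n → ZMod 2,
          (Finset.univ.filter fun i : Fin m => satisfies τ₀ (𝒞 i)).card :=
        Finset.sum_le_sum fun τ _ => hτ₀ τ
      _ = _ := by rw [Finset.sum_const, Finset.card_univ, smul_eq_mul]
  have hcards : 0 < Fintype.card (Fin n → ZMod 2) := Fintype.card_pos
  have hkey : m * Fintype.card (Fin n → ZMod 2) ≤
      (2 * (Finset.univ.filter fun i : Fin m => satisfies τ₀ (𝒞 i)).card) *
        Fintype.card (Fin n → ZMod 2) := by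
    calc m * Fintype.card (Fin n → ZMod 2)
        = ∑ i : Fin m, 2 * (Finset.univ.filter fun τ : Fin n → ZMod 2 =>
            satisfies τ (𝒞 i)).card := h1.symm
      _ = 2 * ∑ i : Fin m, (Finset.univ.filter fun τ : Fin n → ZMod 2 =>
            satisfies τ (𝒞 i)).card := by rw [Finset.mul_sum]
      _ = 2 * ∑ τ : Fin n → ZMod 2, (Finset.univ.filter fun i : Fin m =>
            satisfies τ (𝒞 i)).card := by rw [hdc]
      _ ≤ 2 * (Fintype.card (Fin n → ZMod 2) *
            (Finset.univ.filter fun i : Fin m => satisfies τ₀ (𝒞 i)).card) :=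
          Nat.mul_le_mul_left _ h2
      _ = (2 * (Finset.univ.filter fun i : Fin m => satisfies τ₀ (𝒞 i)).card) *
            Fintype.card (Fin n → ZMod 2) := by ring
  exact Nat.le_of_mul_le_mul_right hkey hcards

lemma xorValAt_le_xorVal (𝒞 : XorInstance n m) (τ : Fin n → ZMod 2) :
    xorValAt 𝒞 τ ≤ xorVal 𝒞 :=
  le_ciSup (Set.Finite.bddAbove (Set.finite_range _)) τ

lemma xorVal_half (hm : 0 < m) (𝒞 : XorInstance n m) : 1/2 ≤ xorVal 𝒞 := by
  obtain ⟨τ, hτ⟩ := exists_half 𝒞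
  refine le_trans ?_ (xorValAt_le_xorVal 𝒞 τ)
  rw [xorValAt, le_div_iff₀ (by exact_mod_cast hm)]
  have : (m : ℝ) ≤ 2 * ((Finset.univ.filter fun i : Fin m => satisfies τ (𝒞 i)).card : ℝ) := by
    exact_mod_cast hτ
  linarith

lemma memPres_iff {𝒞 : XorInstance n m} {π : GVert 𝒞 ≃ GVert (homogInst 𝒞)} {u v : GVert 𝒞} :
    s(u,v) ∈ Pres 𝒞 π ↔
      (gadgetGraph 𝒞).Adj u v ∧ (gadgetGraph (homogInst 𝒞)).Adj (π u) (π v) := by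
  rw [Pres, Finset.mem_filter, Sym2.map_pair_eq, mem_edges, mem_edges]

lemma GIval_eq {V W : Type*} [Fintype V] [Fintype W] (G : SimpleGraph V) (H : SimpleGraph W)
    (π : V ≃ W) :
    ∃ P : Finset (Sym2 V), P ⊆ edges G ∧
      (∀ u v : V, s(u,v) ∈ P ↔ (G.Adj u v ∧ H.Adj (π u) (π v))) ∧
      GIval G H π = (P.card : ℝ) / max ((edges G).card : ℝ) ((edges H).card : ℝ) := by
  refine ⟨(edges G).filter fun e => Sym2.map (fun x => π x) e ∈ edges H,
    Finset.filter_subset _ _, fun u v => ?_, rfl⟩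
  rw [Finset.mem_filter, Sym2.map_pair_eq, mem_edges, mem_edges]


set_option maxHeartbeats 1000000

/-- **Soundness decoding.**  Let `H` be the 3-uniform constraint
hypergraph of the 3XOR instance `𝒞` (with `m = cn` distinct hyperedges, `c ≥ 1`);
suppose it is `(ε, 100c)`-degree bounded and `(β, γ)`-asymmetric with `γ ≥ 200ε`.
Setting `δ = min{1/200, γ/48, ε/(95c)}`, if `GI(G_𝒞, G_{homog(𝒞)}) ≥ 1 − δ` then
`val(𝒞) ≥ 0.9 − 100(ε + β)`. -/
theorem soundness_decoding (n m : ℕ) (c ε β γ : ℝ) (hc : 1 ≤ c) (hm : (m : ℝ) = c * n)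
    (𝒞 : XorInstance n m)
    (hedges : Function.Injective fun i : Fin m => tripleOf (𝒞 i))
    (hdb : DegBounded (Finset.univ.image fun i : Fin m => tripleOf (𝒞 i)) ε (100 * c))
    (hasym : hAsymmetric (Finset.univ.image fun i : Fin m => tripleOf (𝒞 i)) β γ)
    (hγ : 200 * ε ≤ γ)
    (hGI : 1 - min (1 / 200) (min (γ / 48) (ε / (95 * c))) ≤
      GI (gadgetGraph 𝒞) (gadgetGraph (homogInst 𝒞))) :
    0.9 - 100 * (ε + β) ≤ xorVal 𝒞 := by
  have hc0 : (0:ℝ) < c := lt_of_lt_of_le one_pos hc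
  set δ := min (1/200 : ℝ) (min (γ/48) (ε/(95*c))) with hδdef
  have hδ1 : δ ≤ 1/200 := min_le_left _ _
  have hδε : δ ≤ ε/(95*c) := le_trans (min_le_right _ _) (min_le_right _ _)
  have hδγ : δ ≤ γ/48 := le_trans (min_le_right _ _) (min_le_left _ _)
  have hGI1 : GI (gadgetGraph 𝒞) (gadgetGraph (homogInst 𝒞)) ≤ 1 := GI_le_one _ _
  have hδ0 : 0 ≤ δ := by linarith
  have hε0 : 0 ≤ ε := by
    have h1 : (0:ℝ) ≤ ε / (95*c) := le_trans hδ0 hδε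
    have h2 := mul_nonneg h1 (by linarith : (0:ℝ) ≤ 95*c)
    rwa [div_mul_cancel₀ _ (by positivity : (95:ℝ)*c ≠ 0)] at h2
  have hγ0 : 0 ≤ γ := by
    have : (0:ℝ) ≤ γ/48 := le_trans hδ0 hδγ
    linarith
  -- degenerate case n = 0
  rcases Nat.eq_zero_or_pos n with hn0 | hn1
  · exfalso
    have hm0 : m = 0 := by
      have : (m:ℝ) = 0 := by rw [hm, hn0]; simp
      exact_mod_cast this
    have hcard1 : Fintype.card (Sym2 (GVert 𝒞)) = 0 := by
      rw [Sym2.card, card_gvert, hn0, hm0]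
      rfl
    have hcard2 : Fintype.card (Sym2 (GVert (homogInst 𝒞))) = 0 := by
      rw [Sym2.card, card_gvert, hn0, hm0]
      rfl
    have he1 : ((edges (gadgetGraph 𝒞)).card : ℝ) = 0 := by
      have := (Finset.card_le_univ (edges (gadgetGraph 𝒞))).trans
        (le_of_eq (Finset.card_univ.trans hcard1))
      exact_mod_cast Nat.le_zero.mp this
    have he2 : ((edges (gadgetGraph (homogInst 𝒞))).card : ℝ) = 0 := by
      have := (Finset.card_le_univ (edges (gadgetGraph (homogInst 𝒞)))).trans
        (le_of_eq (Finset.card_univ.trans hcard2))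
      exact_mod_cast Nat.le_zero.mp this
    have hGI0 : GI (gadgetGraph 𝒞) (gadgetGraph (homogInst 𝒞)) ≤ 0 := by
      refine Real.iSup_le (fun π => ?_) le_rfl
      rw [GIval, he1, he2]
      norm_num
    linarith
  -- basic facts
  have hm1 : 1 ≤ m := by
    by_contra h
    push_neg at h
    interval_cases m
    have hn1' : (1:ℝ) ≤ (n:ℝ) := by exact_mod_cast hn1
    have : (0:ℝ) = c * n := by exact_mod_cast hm
    nlinarith
  have hn3 : 3 ≤ n := by
    have := Fintype.card_le_of_injective _ (𝒞 ⟨0, hm1⟩).inj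
    simpa using this
  have hβ0 : 0 ≤ β := by
    by_contra hβ
    push_neg at hβ
    have hEne : (Finset.univ.image fun i : Fin m => tripleOf (𝒞 i)).Nonempty :=
      ⟨tripleOf (𝒞 ⟨0, hm1⟩), Finset.mem_image_of_mem _ (Finset.mem_univ _)⟩
    have hEcard : (0:ℝ) < ((Finset.univ.image fun i : Fin m => tripleOf (𝒞 i)).card : ℝ) := by
      exact_mod_cast Finset.card_pos.mpr hEne
    have hfix : fixedCount (1 : Equiv.Perm (Fin n)) = n := by
      simp [fixedCount]
    have haut1 : hAut (Finset.univ.image fun i : Fin m => tripleOf (𝒞 i))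
        (1 : Equiv.Perm (Fin n)) = 1 := by
      rw [hAut]
      have hfe : (Finset.univ.image fun i : Fin m => tripleOf (𝒞 i)).filter
          (fun e => e.image (fun x => (1 : Equiv.Perm (Fin n)) x) ∈
            Finset.univ.image fun i : Fin m => tripleOf (𝒞 i))
          = Finset.univ.image fun i : Fin m => tripleOf (𝒞 i) := by
        refine Finset.filter_true_of_mem fun e he => ?_
        simpa [Finset.image_id] using he
      rw [hfe, div_self (ne_of_gt hEcard)]
    have happ := hasym 1 (by
      rw [hfix]
      have : (0:ℝ) ≤ (n:ℝ) := Nat.cast_nonneg _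
      nlinarith)
    rw [haut1] at happ
    linarith
  -- easy case: ε is large
  rcases le_or_gt (1/250 : ℝ) ε with hεbig | hεsmall
  · have hhalf := xorVal_half (by omega) 𝒞
    linarith
  -- main case: decoding
  obtain ⟨π, hπ⟩ := exists_GIval_max 𝒞
  have hGIπ : 1 - δ ≤ GIval (gadgetGraph 𝒞) (gadgetGraph (homogInst 𝒞)) π := le_trans hGI hπ
  obtain ⟨P0, hPsub, hPmem, hGIval_eq⟩ :=
    GIval_eq (gadgetGraph 𝒞) (gadgetGraph (homogInst 𝒞)) π
  have hPP : P0 = Pres 𝒞 π := Finset.ext (fun e => by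
    induction e using Sym2.ind with
    | _ u v => rw [hPmem, memPres_iff])
  rw [hPP] at hPsub hGIval_eq
  have hMn : (n:ℝ) ≤ max ((edges (gadgetGraph 𝒞)).card : ℝ)
      ((edges (gadgetGraph (homogInst 𝒞))).card : ℝ) :=
    le_max_of_le_left (by exact_mod_cast le_edges_card 𝒞)
  have hMpos : (0:ℝ) < max ((edges (gadgetGraph 𝒞)).card : ℝ)
      ((edges (gadgetGraph (homogInst 𝒞))).card : ℝ) := by
    have : (3:ℝ) ≤ (n:ℝ) := by exact_mod_cast hn3
    linarith
  have hMle : max ((edges (gadgetGraph 𝒞)).card : ℝ)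
      ((edges (gadgetGraph (homogInst 𝒞))).card : ℝ) ≤ (n:ℝ) + 22*m := by
    refine max_le ?_ ?_ <;> exact_mod_cast edges_card_le _
  have hPle : ((Pres 𝒞 π).card : ℝ) ≤ ((edges (gadgetGraph 𝒞)).card : ℝ) := by
    exact_mod_cast Finset.card_le_card hPsub
  have hPge : (1 - δ) * max ((edges (gadgetGraph 𝒞)).card : ℝ)
      ((edges (gadgetGraph (homogInst 𝒞))).card : ℝ) ≤ ((Pres 𝒞 π).card : ℝ) := by
    rw [hGIval_eq] at hGIπ
    exact (le_div_iff₀ hMpos).mp hGIπ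
  have hbadcard : ((badG 𝒞 π).card : ℝ)
      = ((edges (gadgetGraph 𝒞)).card : ℝ) - ((Pres 𝒞 π).card : ℝ) := by
    rw [badG, Finset.card_sdiff_of_subset hPsub]
    rw [Nat.cast_sub (Finset.card_le_card hPsub)]
  have hbadG : ((badG 𝒞 π).card : ℝ) ≤ δ * max ((edges (gadgetGraph 𝒞)).card : ℝ)
      ((edges (gadgetGraph (homogInst 𝒞))).card : ℝ) := by
    rw [hbadcard]
    have hemax := le_max_left ((edges (gadgetGraph 𝒞)).card : ℝ)
      ((edges (gadgetGraph (homogInst 𝒞))).card : ℝ)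
    nlinarith
  have hδM : δ * max ((edges (gadgetGraph 𝒞)).card : ℝ)
      ((edges (gadgetGraph (homogInst 𝒞))).card : ℝ) ≤ (23/95) * (ε * n) := by
    have h1 : δ * max ((edges (gadgetGraph 𝒞)).card : ℝ)
        ((edges (gadgetGraph (homogInst 𝒞))).card : ℝ) ≤ (ε/(95*c)) * ((n:ℝ) + 22*m) :=
      mul_le_mul hδε hMle (le_of_lt hMpos) (le_trans hδ0 hδε)
    have h2 : (ε/(95*c)) * ((n:ℝ) + 22*m) ≤ (23/95) * (ε * n) := by
      rw [hm, div_mul_eq_mul_div, div_le_iff₀ (by positivity : (0:ℝ) < 95*c)]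
      have hn0' : (0:ℝ) ≤ (n:ℝ) := Nat.cast_nonneg _
      have key : (0:ℝ) ≤ ε * (n:ℝ) * (c - 1) :=
        mul_nonneg (mul_nonneg hε0 hn0') (by linarith)
      nlinarith [key]
    linarith
  have hbadG' : ((badG 𝒞 π).card : ℝ) ≤ (23/95) * (ε * n) := le_trans hbadG hδM
  -- degree sum over bad variables
  have hdegsum : ((∑ x ∈ BvSet 𝒞 π,
      (Finset.univ.filter fun i : Fin m => x ∈ tripleOf (𝒞 i)).card : ℕ) : ℝ)
      ≤ (11800/95) * (ε * m) := by
    rcases Finset.eq_empty_or_nonempty (BvSet 𝒞 π) with hBv | hBv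
    · rw [hBv]
      simp only [Finset.sum_empty, Nat.cast_zero]
      have : (0:ℝ) ≤ (m:ℝ) := Nat.cast_nonneg _
      nlinarith
    · have hBv1 : (1:ℝ) ≤ ((BvSet 𝒞 π).card : ℝ) := by
        exact_mod_cast Finset.card_pos.mpr hBv
      have hBvle : ((BvSet 𝒞 π).card : ℝ) ≤ ((badG 𝒞 π).card : ℝ) := by
        exact_mod_cast card_BvSet_le
      have hεn : (1:ℝ) ≤ (23/95) * (ε * n) := by linarith
      have hkn : ⌈ε * (n:ℝ)⌉₊ ≤ n := by
        rw [Nat.ceil_le]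
        have hn0' : (0:ℝ) ≤ (n:ℝ) := Nat.cast_nonneg _
        nlinarith
      have hBvk : (BvSet 𝒞 π).card ≤ ⌈ε * (n:ℝ)⌉₊ := by
        have h1 : ((BvSet 𝒞 π).card : ℝ) ≤ ε * n := by nlinarith
        exact_mod_cast le_trans h1 (Nat.le_ceil _)
      obtain ⟨S, hSsub, hScard⟩ := Finset.exists_superset_card_eq hBvk
        (by rwa [Fintype.card_fin])
      have hmono : (∑ x ∈ BvSet 𝒞 π,
          (Finset.univ.filter fun i : Fin m => x ∈ tripleOf (𝒞 i)).card)
          ≤ ∑ x ∈ S, (Finset.univ.filter fun i : Fin m => x ∈ tripleOf (𝒞 i)).card :=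
        Finset.sum_le_sum_of_subset hSsub
      have hrw : ∑ x ∈ S, (Finset.univ.filter fun i : Fin m => x ∈ tripleOf (𝒞 i)).card
          = ∑ x ∈ S, hdeg (Finset.univ.image fun i : Fin m => tripleOf (𝒞 i)) x :=
        Finset.sum_congr rfl fun x _ => (hdeg_eq hedges x).symm
      have hdb' := hdb S hScard
      rw [hScard] at hdb'
      have hk : (⌈ε * (n:ℝ)⌉₊ : ℝ) ≤ (118/95) * (ε * n) := by
        have h1 : (⌈ε * (n:ℝ)⌉₊ : ℝ) < ε * n + 1 :=
          Nat.ceil_lt_add_one (by positivity)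
        linarith
      calc ((∑ x ∈ BvSet 𝒞 π,
            (Finset.univ.filter fun i : Fin m => x ∈ tripleOf (𝒞 i)).card : ℕ) : ℝ)
          ≤ ((∑ x ∈ S, hdeg (Finset.univ.image fun i : Fin m => tripleOf (𝒞 i)) x : ℕ) : ℝ) := by
            rw [← hrw]; exact_mod_cast hmono
        _ ≤ 100 * c * (⌈ε * (n:ℝ)⌉₊ : ℝ) := hdb'
        _ ≤ 100 * c * ((118/95) * (ε * n)) := by nlinarith
        _ = (11800/95) * (ε * (c * n)) := by ring
        _ = (11800/95) * (ε * m) := by rw [← hm]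
  -- total bad equation count
  have hnm : (n:ℝ) ≤ (m:ℝ) := by
    rw [hm]
    have hn0' : (0:ℝ) ≤ (n:ℝ) := Nat.cast_nonneg _
    nlinarith
  have hBdR : (((Finset.univ.filter fun i : Fin m => ¬ GoodEq 𝒞 π i).card : ℕ) : ℝ)
      ≤ (11823/95) * (ε * m) := by
    have h1 : (((Finset.univ.filter fun i : Fin m => ¬ GoodEq 𝒞 π i).card : ℕ) : ℝ)
        ≤ ((badG 𝒞 π).card : ℝ) + ((∑ x ∈ BvSet 𝒞 π,
          (Finset.univ.filter fun i : Fin m => x ∈ tripleOf (𝒞 i)).card : ℕ) : ℝ) := by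
      exact_mod_cast card_badEq_le
    have h2 : (23/95) * (ε * n) ≤ (23/95) * (ε * m) := by nlinarith
    linarith
  -- count of satisfied equations
  have hsat : m ≤ (Finset.univ.filter fun i : Fin m => satisfies (tau π) (𝒞 i)).card
      + (Finset.univ.filter fun i : Fin m => ¬ GoodEq 𝒞 π i).card := by
    have hsplit := Finset.card_filter_add_card_filter_not
      (s := (Finset.univ : Finset (Fin m))) (p := fun i => GoodEq 𝒞 π i)
    rw [Finset.card_univ, Fintype.card_fin] at hsplit
    have hsub : Finset.univ.filter (fun i : Fin m => GoodEq 𝒞 π i)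
        ⊆ Finset.univ.filter (fun i : Fin m => satisfies (tau π) (𝒞 i)) := by
      intro i hi
      rw [Finset.mem_filter] at hi ⊢
      exact ⟨Finset.mem_univ _, good_sat hi.2⟩
    have := Finset.card_le_card hsub
    omega
  -- conclusion
  refine le_trans ?_ (xorValAt_le_xorVal 𝒞 (tau π))
  rw [xorValAt, le_div_iff₀ (by exact_mod_cast hm1 : (0:ℝ) < (m:ℝ))]
  have hsatR : (m:ℝ) - (11823/95) * (ε * m)
      ≤ ((Finset.univ.filter fun i : Fin m => satisfies (tau π) (𝒞 i)).card : ℝ) := by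
    have h1 : (m:ℝ) ≤ ((Finset.univ.filter fun i : Fin m => satisfies (tau π) (𝒞 i)).card : ℝ)
        + (((Finset.univ.filter fun i : Fin m => ¬ GoodEq 𝒞 π i).card : ℕ) : ℝ) := by
      exact_mod_cast hsat
    linarith
  have hm0' : (0:ℝ) ≤ (m:ℝ) := Nat.cast_nonneg _
  nlinarith

end Giso
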